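/- (Calibration in one dimension.) Let θ ∈ [0,1) and set α_θ := 2^{2−θ}/(1−θ). Assume there exists a function F : ℝ² → ℝ satisfying: (i) F(2j+1, 2j) − F(2j−1, 2j) = 2 for every j ∈ ℤ; (ii) F(2j−1, 2j) − F(2j−1, 2j−2) = 4/(1−θ) for every j ∈ ℤ; (iii) F(x₂, z) − F(x₁, z) ≤ (x₂−z)³ − (x₁−z)³ for all x₁ ≤ x₂ and all z ∈ ℝ; (iv) F(x, z₂) − F(x, z₁) ≤ (2^{2−θ}/(1−θ))·|z₂−z₁|^θ for all x ∈ ℝ and all z₁, z₂ ∈ ℝ. Then the canonical staircase S(x) = 2⌊(x+1)/2⌋, together with all its oblique translations x ↦ S(x−τ₀)+τ₀ with τ₀ ∈ [−1,1], is an entire local minimizer of the functional JF_{θ,α_θ,3,1}. -/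

import Mathlib

open MeasureTheory Set Filter Topology

/-- The canonical staircase `S(x) = 2⌊(x+1)/2⌋`. -/
noncomputable def stairS (x : ℝ) : ℝ := 2 * (⌊(x + 1) / 2⌋ : ℤ)

/-- The canonical `(H,V)`-staircase. -/
noncomputable def stairHV (H V x : ℝ) : ℝ := V * stairS (x / H)

/-- A pure-jump structure on `u : ℝ → ℝ`, witnessing that `u ∈ PJ_loc(ℝ)`:
a countable jump set `S`, a jump function `J` (nonzero exactly on `S`),
such that on every bounded open interval the jumps are absolutely summable and
`u` is represented as a constant plus the sum of the jumps to the left. -/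
structure PJloc (u : ℝ → ℝ) where
  S : Set ℝ
  J : ℝ → ℝ
  countable : S.Countable
  J_ne : ∀ x ∈ S, J x ≠ 0
  J_zero : ∀ x ∉ S, J x = 0
  summable_loc : ∀ a b : ℝ, a < b →
    Summable (fun y : ↥(S ∩ Set.Ioo a b) => |J y.1|)
  repr : ∀ a b : ℝ, a < b → ∃ c : ℝ,
    ∀ x ∈ Set.Ioo a b,
      u x = c + ∑' y : {y : ℝ // y ∈ S ∩ Set.Ioo a b ∧ y ≤ x}, J y.1

/-- The jump functional with fidelity term
`JF_{θ,α,β,M}(Ω,u) = α ∑_{x ∈ S_u ∩ Ω} |u⁺-u⁻|^θ + β ∫_Ω (u - Mx)² dx`. -/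
noncomputable def JF (θ α β M : ℝ) (Ω : Set ℝ) (u : ℝ → ℝ) (P : PJloc u) : ENNReal :=
  ENNReal.ofReal α * (∑' x : ↥(P.S ∩ Ω), ENNReal.ofReal (|P.J x.1| ^ θ)) +
  ENNReal.ofReal β * ∫⁻ x in Ω, ENNReal.ofReal ((u x - M * x) ^ 2)

/-- `u` (with pure-jump structure `Pu`) is an entire local minimizer of `JF_{θ,α,β,M}`:
for every open `Ω ⊆ ℝ` and every pure-jump competitor `v` coinciding with `u`
outside a compact subset of `Ω`, the value on `u` does not exceed the value on `v`. -/
def EntireLocalMin (θ α β M : ℝ) (u : ℝ → ℝ) (Pu : PJloc u) : Prop :=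
  ∀ Ω : Set ℝ, IsOpen Ω →
    ∀ (v : ℝ → ℝ) (Pv : PJloc v),
      (∃ K : Set ℝ, IsCompact K ∧ K ⊆ Ω ∧ ∀ x ∉ K, v x = u x) →
      JF θ α β M Ω u Pu ≤ JF θ α β M Ω v Pv

namespace CalibAux


/-- interval integral of the square. -/
lemma integral_sq (a t z : ℝ) : ∫ x in a..t, 3*(x-z)^2 = (t-z)^3 - (a-z)^3 := by
  have hder : ∀ x ∈ Set.uIcc a t, HasDerivAt (fun y => (y-z)^3) (3*(x-z)^2) x := by
    intro x _
    have := ((hasDerivAt_id x).sub_const z).fun_pow 3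
    simpa [mul_comm] using this
  rw [intervalIntegral.integral_eq_sub_of_hasDerivAt hder]
  apply Continuous.intervalIntegrable; continuity

/-- `∫⁻` of the square over `Ioo`. -/
lemma sq_lintegral (a t z : ℝ) (h : a ≤ t) :
    ∫⁻ x in Set.Ioo a t, ENNReal.ofReal (3*(x-z)^2) = ENNReal.ofReal ((t-z)^3 - (a-z)^3) := by
  rw [setLIntegral_congr (Ioo_ae_eq_Ioc (a := a) (b := t))]
  rw [← MeasureTheory.ofReal_integral_eq_lintegral_ofReal]
  · rw [← intervalIntegral.integral_of_le h, integral_sq]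
  · apply Continuous.integrableOn_Ioc; continuity
  · filter_upwards with x
    positivity

/-- splitting a lintegral over `Ioo`. -/
lemma lintegral_Ioo_split (f : ℝ → ENNReal) (A B C : ℝ) (h1 : A ≤ B) (h2 : B ≤ C) :
    ∫⁻ x in Set.Ioo A C, f x = (∫⁻ x in Set.Ioo A B, f x) + ∫⁻ x in Set.Ioo B C, f x := by
  rw [setLIntegral_congr (Ioo_ae_eq_Ioc (a := A) (b := C)),
    setLIntegral_congr (Ioo_ae_eq_Ioc (a := A) (b := B)),
    setLIntegral_congr (Ioo_ae_eq_Ioc (a := B) (b := C)),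
    ← lintegral_union measurableSet_Ioc (Set.Ioc_disjoint_Ioc_of_le le_rfl),
    Set.Ioc_union_Ioc_eq_Ioc h1 h2]



variable {ι : Type*} {g : ι → ℝ}

/-- tail of a summable family can be made small. -/
lemma tail_small (hg : Summable fun i => |g i|) {ε : ℝ} (hε : 0 < ε) :
    ∃ Φ : Finset ι, ∑' i : {i // i ∉ Φ}, |g i.1| < ε := by
  have h := tendsto_tsum_compl_atTop_zero (fun i => |g i|)
  have h2 := (tendsto_order.1 h).2 ε hε
  exact h2.exists

lemma abs_tsum_indicator_le (hg : Summable fun i => |g i|) (A : Set ι) :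
    |∑' i, A.indicator g i| ≤ ∑' i, A.indicator (fun i => |g i|) i := by
  have h1 : Summable fun i => ‖A.indicator g i‖ := by
    apply Summable.of_nonneg_of_le (fun i => norm_nonneg _) _ (hg.indicator A)
    intro i
    by_cases h : i ∈ A <;> simp [Set.indicator_apply, h, abs_nonneg]
  have := norm_tsum_le_tsum_norm h1
  rw [Real.norm_eq_abs] at this
  refine this.trans (le_of_eq (tsum_congr fun i => ?_))
  by_cases h : i ∈ A <;> simp [Set.indicator_apply, h]

lemma tsum_indicator_mono (hg : Summable fun i => |g i|) {A B : Set ι} (hAB : A ⊆ B) :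
    ∑' i, A.indicator (fun i => |g i|) i ≤ ∑' i, B.indicator (fun i => |g i|) i := by
  apply Summable.tsum_le_tsum _ (hg.indicator A) (hg.indicator B)
  intro i
  by_cases hA : i ∈ A
  · simp [Set.indicator_apply, hA, hAB hA]
  · by_cases hB : i ∈ B <;> simp [Set.indicator_apply, hA, hB, abs_nonneg]

lemma tsum_indicator_compl_finset (hg : Summable fun i => |g i|) (Φ : Finset ι) :
    ∑' i, ((↑Φ : Set ι)ᶜ).indicator (fun i => |g i|) i = ∑' i : {i // i ∉ Φ}, |g i.1| := by
  rw [← tsum_subtype]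
  rw [← Equiv.tsum_eq (⟨fun x => ⟨x.1, x.2⟩, fun x => ⟨x.1, x.2⟩, fun _ => rfl, fun _ => rfl⟩ :
    {i : ι // i ∈ ((↑Φ : Set ι)ᶜ)} ≃ {i // i ∉ Φ}) (fun i => |g i.1|)]
  rfl

/-- difference of indicator tsums over nested sets. -/
lemma tsum_indicator_diff (hg : Summable fun i => |g i|) {A B : Set ι} (hAB : A ⊆ B) :
    (∑' i, B.indicator g i) - ∑' i, A.indicator g i = ∑' i, (B \ A).indicator g i := by
  rw [← Summable.tsum_sub ((hg.of_abs).indicator B) ((hg.of_abs).indicator A)]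
  apply tsum_congr
  intro i
  by_cases hA : i ∈ A
  · simp [Set.indicator_apply, hA, hAB hA]
  · by_cases hB : i ∈ B <;> simp [Set.indicator_apply, hA, hB]




variable {w : ℝ → ℝ}

lemma repr_indicator (P : PJloc w) {a b : ℝ} (hab : a < b) :
    ∃ c : ℝ, ∀ x ∈ Set.Ioo a b, w x = c + ∑' i : ↥(P.S ∩ Set.Ioo a b),
      Set.indicator {i : ↥(P.S ∩ Set.Ioo a b) | (i : ℝ) ≤ x} (fun i => P.J i) i := by
  obtain ⟨c, hc⟩ := P.repr a b hab
  refine ⟨c, fun x hx => ?_⟩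
  rw [hc x hx]
  congr 1
  rw [← tsum_subtype, ← Equiv.tsum_eq
    (⟨fun (y : {y : ℝ // y ∈ P.S ∩ Set.Ioo a b ∧ y ≤ x}) =>
        (⟨⟨y.1, y.2.1⟩, y.2.2⟩ : {i : ↥(P.S ∩ Set.Ioo a b) // i ∈ {i : ↥(P.S ∩ Set.Ioo a b) | (i : ℝ) ≤ x}}),
      fun j => ⟨j.1.1, ⟨j.1.2, j.2⟩⟩, fun _ => rfl, fun _ => rfl⟩ :
      {y : ℝ // y ∈ P.S ∩ Set.Ioo a b ∧ y ≤ x} ≃ _)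
    (fun j => P.J j.1.1)]
  rfl

lemma tendsto_left (P : PJloc w) (x₀ : ℝ) :
    Tendsto w (𝓝[<] x₀) (𝓝 (w x₀ - P.J x₀)) := by
  have hab : x₀ - 1 < x₀ + 1 := by linarith
  obtain ⟨c, hw⟩ := repr_indicator P hab
  set ιι := ↥(P.S ∩ Set.Ioo (x₀-1) (x₀+1)) with hιι
  set g : ιι → ℝ := fun i => P.J i with hgdef
  have hg : Summable fun i => |g i| := P.summable_loc _ _ hab
  have hx₀ : x₀ ∈ Set.Ioo (x₀-1) (x₀+1) := ⟨by linarith, by linarith⟩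
  set L := c + ∑' i, Set.indicator {i : ιι | (i:ℝ) < x₀} g i with hL
  have hii : w x₀ - P.J x₀ = L := by
    have hsub : {i : ιι | (i:ℝ) < x₀} ⊆ {i : ιι | (i:ℝ) ≤ x₀} :=
      fun i hi => (le_of_lt (hi : (i:ℝ) < x₀) : (i:ℝ) ≤ x₀)
    have hsplit := tsum_indicator_diff hg hsub
    have hset : {i : ιι | (i:ℝ) ≤ x₀} \ {i : ιι | (i:ℝ) < x₀} = {i : ιι | (i:ℝ) = x₀} := by
      ext i
      constructor
      · rintro ⟨h1, h2⟩
        exact le_antisymm h1 (not_lt.mp h2)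
      · rintro (h : (i:ℝ) = x₀)
        exact ⟨le_of_eq h, by rw [Set.mem_setOf_eq, h]; exact lt_irrefl _⟩
    have hval : ∑' i, Set.indicator {i : ιι | (i:ℝ) = x₀} g i = P.J x₀ := by
      by_cases hmem : x₀ ∈ P.S
      · have hmem' : x₀ ∈ P.S ∩ Set.Ioo (x₀-1) (x₀+1) := ⟨hmem, hx₀⟩
        have hone : {i : ιι | (i:ℝ) = x₀} = {(⟨x₀, hmem'⟩ : ιι)} := by
          ext i
          simp only [Set.mem_setOf_eq, Set.mem_singleton_iff]
          exact ⟨fun h => Subtype.ext h, fun h => by rw [h]⟩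
        rw [hone, ← tsum_subtype, tsum_singleton]
      · have hnone : {i : ιι | (i:ℝ) = x₀} = (∅ : Set ιι) := by
          ext i
          simp only [Set.mem_setOf_eq, Set.mem_empty_iff_false, iff_false]
          intro h
          exact hmem (h ▸ i.2.1)
        rw [hnone, P.J_zero x₀ hmem]
        simp
    rw [hset, hval] at hsplit
    have := hw x₀ hx₀
    rw [hL, this]
    linarith
  rw [hii, Metric.tendsto_nhdsWithin_nhds]
  intro ε hε
  obtain ⟨Φ, hΦ⟩ := tail_small hg hε
  set t : Finset ℝ := insert (x₀-1) ((Φ.image (fun i : ιι => (i:ℝ))).filter (· < x₀)) with ht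
  have htne : t.Nonempty := ⟨x₀-1, Finset.mem_insert_self _ _⟩
  set δ' := t.max' htne with hδ'
  have hδ'mem := t.max'_mem htne
  have hδ'lt : δ' < x₀ := by
    rw [hδ']
    rcases Finset.mem_insert.mp hδ'mem with h | h
    · rw [h]; linarith
    · exact (Finset.mem_filter.mp h).2
  refine ⟨x₀ - δ', by linarith, ?_⟩
  intro x hx hdist
  have hxlt : x < x₀ := hx
  rw [Real.dist_eq, abs_of_neg (by linarith : x - x₀ < 0)] at hdist
  have hxgt : δ' < x := by linarith
  have hlow : x₀ - 1 ≤ δ' := t.le_max' _ (Finset.mem_insert_self _ _)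
  have hxIoo : x ∈ Set.Ioo (x₀-1) (x₀+1) := ⟨by linarith, by linarith⟩
  rw [Real.dist_eq, hw x hxIoo]
  have hsub2 : {i : ιι | (i:ℝ) ≤ x} ⊆ {i : ιι | (i:ℝ) < x₀} :=
    fun i hi => (lt_of_le_of_lt (hi : (i:ℝ) ≤ x) hxlt : (i:ℝ) < x₀)
  have hdiff := tsum_indicator_diff hg hsub2
  have hDsub : ({i : ιι | (i:ℝ) < x₀} \ {i : ιι | (i:ℝ) ≤ x}) ⊆ ((↑Φ : Set ιι)ᶜ) := by
    rintro i ⟨hi1, hi2⟩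
    simp only [Set.mem_compl_iff, Finset.mem_coe]
    intro hiΦ
    have : (i:ℝ) ∈ t := by
      apply Finset.mem_insert_of_mem
      rw [Finset.mem_filter]
      exact ⟨Finset.mem_image_of_mem _ hiΦ, by simpa using hi1⟩
    have hle := t.le_max' _ this
    rw [← hδ'] at hle
    exact hi2 (show (i:ℝ) ≤ x by linarith)
  have hbound : |∑' i, Set.indicator ({i : ιι | (i:ℝ) < x₀} \ {i : ιι | (i:ℝ) ≤ x}) g i| < ε := by
    calc |∑' i, Set.indicator ({i : ιι | (i:ℝ) < x₀} \ {i : ιι | (i:ℝ) ≤ x}) g i|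
        ≤ ∑' i, Set.indicator ({i : ιι | (i:ℝ) < x₀} \ {i : ιι | (i:ℝ) ≤ x}) (fun i => |g i|) i :=
          abs_tsum_indicator_le hg _
      _ ≤ ∑' i, ((↑Φ : Set ιι)ᶜ).indicator (fun i => |g i|) i := tsum_indicator_mono hg hDsub
      _ = ∑' i : {i // i ∉ Φ}, |g i.1| := tsum_indicator_compl_finset hg Φ
      _ < ε := hΦ
  have : c + (∑' i, Set.indicator {i : ιι | (i:ℝ) ≤ x} g i) - L
      = -((∑' i, Set.indicator {i : ιι | (i:ℝ) < x₀} g i) - ∑' i, Set.indicator {i : ιι | (i:ℝ) ≤ x} g i) := by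
    rw [hL]; ring
  rw [this, hdiff, abs_neg]
  exact hbound

lemma J_eq_of_leftlim (P : PJloc w) {x₀ L : ℝ} (h : Tendsto w (𝓝[<] x₀) (𝓝 L)) :
    P.J x₀ = w x₀ - L := by
  have := tendsto_nhds_unique h (tendsto_left P x₀)
  linarith

lemma jump_congr {w₁ w₂ : ℝ → ℝ} (P₁ : PJloc w₁) (P₂ : PJloc w₂) {x₀ δ : ℝ} (hδ : 0 < δ)
    (heq : ∀ x ∈ Set.Ioo (x₀-δ) (x₀+δ), w₁ x = w₂ x) : P₁.J x₀ = P₂.J x₀ := by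
  have h₂ := tendsto_left P₂ x₀
  have h₂' : Tendsto w₁ (𝓝[<] x₀) (𝓝 (w₂ x₀ - P₂.J x₀)) := by
    apply h₂.congr'
    filter_upwards [Ioo_mem_nhdsLT (by linarith : x₀ - δ < x₀)] with y hy
    exact (heq y ⟨hy.1, lt_of_lt_of_le hy.2 (by linarith)⟩).symm
  have h1 := J_eq_of_leftlim P₁ h₂'
  rw [h1, heq x₀ ⟨by linarith, by linarith⟩]
  have h2 := J_eq_of_leftlim P₂ h₂
  linarith

lemma mem_S_iff (P : PJloc w) (x : ℝ) : x ∈ P.S ↔ P.J x ≠ 0 := by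
  constructor
  · exact P.J_ne x
  · intro h
    by_contra hx
    exact h (P.J_zero x hx)




lemma J_of_const_left {w : ℝ → ℝ} (P : PJloc w) {x₀ l z : ℝ} (hl : l < x₀)
    (h : ∀ x ∈ Set.Ioo l x₀, w x = z) : P.J x₀ = w x₀ - z := by
  apply J_eq_of_leftlim P
  apply Tendsto.congr' (f₁ := fun _ => z) _ tendsto_const_nhds
  filter_upwards [Ioo_mem_nhdsLT hl] with y hy
  exact (h y hy).symm

variable {τ₀ : ℝ} {v : ℝ → ℝ}

lemma stairS_eq {k : ℤ} {y : ℝ} (h1 : 2*(k:ℝ)-1 ≤ y) (h2 : y < 2*(k:ℝ)+1) : stairS y = 2*(k:ℝ) := by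
  unfold stairS
  congr 1
  norm_cast
  rw [Int.floor_eq_iff]
  constructor
  · push_cast; linarith
  · push_cast; linarith

lemma v_eq (hv : ∀ x, v x = stairS (x - τ₀) + τ₀) {k : ℤ} {x : ℝ}
    (h1 : 2*(k:ℝ)-1+τ₀ ≤ x) (h2 : x < 2*(k:ℝ)+1+τ₀) : v x = 2*(k:ℝ)+τ₀ := by
  rw [hv, stairS_eq (by linarith) (by linarith)]

lemma exists_cell (τ₀ x₀ : ℝ) : ∃ k : ℤ, 2*(k:ℝ)-1+τ₀ < x₀ ∧ x₀ ≤ 2*(k:ℝ)+1+τ₀ := by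
  refine ⟨⌈(x₀-τ₀-1)/2⌉, ?_, ?_⟩
  · have := Int.ceil_lt_add_one ((x₀-τ₀-1)/2)
    linarith
  · have := Int.le_ceil ((x₀-τ₀-1)/2)
    linarith

lemma v_J_jump (hv : ∀ x, v x = stairS (x - τ₀) + τ₀) (P : PJloc v) (k : ℤ) :
    P.J (2*(k:ℝ)+1+τ₀) = 2 := by
  have hconst : ∀ x ∈ Set.Ioo (2*(k:ℝ)-1+τ₀) (2*(k:ℝ)+1+τ₀), v x = 2*(k:ℝ)+τ₀ :=
    fun x hx => v_eq hv (le_of_lt hx.1) hx.2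
  rw [J_of_const_left P (by linarith) hconst]
  have : v (2*(k:ℝ)+1+τ₀) = 2*((k:ℝ)+1)+τ₀ := by
    have := v_eq hv (k := k+1) (x := 2*(k:ℝ)+1+τ₀) (by push_cast; linarith) (by push_cast; linarith)
    push_cast at this ⊢
    linarith
  rw [this]; ring

lemma v_J_zero (hv : ∀ x, v x = stairS (x - τ₀) + τ₀) (P : PJloc v) {x₀ : ℝ}
    (h : ¬∃ k : ℤ, x₀ = 2*(k:ℝ)+1+τ₀) : P.J x₀ = 0 := by
  obtain ⟨k, hk1, hk2⟩ := exists_cell τ₀ x₀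
  have hk2' : x₀ < 2*(k:ℝ)+1+τ₀ := by
    rcases lt_or_eq_of_le hk2 with h' | h'
    · exact h'
    · exact absurd ⟨k, h'⟩ h
  have hconst : ∀ x ∈ Set.Ioo (2*(k:ℝ)-1+τ₀) x₀, v x = 2*(k:ℝ)+τ₀ :=
    fun x hx => v_eq hv (le_of_lt hx.1) (lt_trans hx.2 hk2')
  rw [J_of_const_left P hk1 hconst, v_eq hv (le_of_lt hk1) hk2']
  ring

lemma v_S_iff (hv : ∀ x, v x = stairS (x - τ₀) + τ₀) (P : PJloc v) (x₀ : ℝ) :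
    x₀ ∈ P.S ↔ ∃ k : ℤ, x₀ = 2*(k:ℝ)+1+τ₀ := by
  rw [mem_S_iff]
  constructor
  · intro hJ
    by_contra h
    exact hJ (v_J_zero hv P h)
  · rintro ⟨k, rfl⟩
    rw [v_J_jump hv P k]
    norm_num




variable {θ alp : ℝ} {Ft : ℝ → ℝ → ℝ}

/-- Estimate for a single cell on which the competitor is `ε`-close to the constant `z`. -/
lemma cell_est (h3 : ∀ x₁ x₂ z : ℝ, x₁ ≤ x₂ → Ft x₂ z - Ft x₁ z ≤ (x₂ - z)^3 - (x₁ - z)^3)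
    {w : ℝ → ℝ} {a b s t z ε M : ℝ} (has : a ≤ s) (hst : s ≤ t) (htb : t ≤ b)
    (hε : 0 ≤ ε) (hM : 0 ≤ M) (hMb : ∀ x ∈ Set.Ioo a b, |w x - x| ≤ M)
    (hcell : ∀ x ∈ Set.Ioo s t, |z - w x| ≤ ε) :
    ENNReal.ofReal (Ft t z - Ft s z)
      ≤ (∫⁻ x in Set.Ioo s t, ENNReal.ofReal (3*(w x - x)^2))
        + ENNReal.ofReal (3*(2*M*ε + ε^2)) * volume (Set.Ioo s t) := by
  calc ENNReal.ofReal (Ft t z - Ft s z)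
      ≤ ENNReal.ofReal ((t-z)^3 - (s-z)^3) := ENNReal.ofReal_le_ofReal (h3 s t z hst)
    _ = ∫⁻ x in Set.Ioo s t, ENNReal.ofReal (3*(x-z)^2) := (sq_lintegral s t z hst).symm
    _ ≤ ∫⁻ x in Set.Ioo s t, (ENNReal.ofReal (3*(2*M*ε + ε^2)) + ENNReal.ofReal (3*(w x - x)^2)) := by
        apply lintegral_mono_ae
        rw [ae_restrict_iff' measurableSet_Ioo]
        apply ae_of_all
        intro x hx
        rw [← ENNReal.ofReal_add (by positivity) (by positivity)]
        apply ENNReal.ofReal_le_ofReal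
        have h1 := hcell x hx
        have h2 := hMb x ⟨lt_of_le_of_lt has hx.1, lt_of_lt_of_le hx.2 htb⟩
        rw [abs_le] at h1 h2
        nlinarith [h1.1, h1.2, h2.1, h2.2]
    _ = ENNReal.ofReal (3*(2*M*ε + ε^2)) * volume (Set.Ioo s t)
        + ∫⁻ x in Set.Ioo s t, ENNReal.ofReal (3*(w x - x)^2) := by
        rw [lintegral_add_left measurable_const, setLIntegral_const]
    _ = _ := by rw [add_comm]

variable {ι : Type*} [DecidableEq ι] {emb : ι → ℝ} {g : ι → ℝ} {w : ℝ → ℝ} {a b za ε M : ℝ}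

lemma main_aux
    (h3 : ∀ x₁ x₂ z : ℝ, x₁ ≤ x₂ → Ft x₂ z - Ft x₁ z ≤ (x₂ - z)^3 - (x₁ - z)^3)
    (h4 : ∀ x z₁ z₂ : ℝ, Ft x z₂ - Ft x z₁ ≤ alp * |z₂ - z₁| ^ θ)
    (halp : 0 ≤ alp)
    (hemb : Function.Injective emb)
    (hrange : ∀ i, a < emb i ∧ emb i < b)
    (hε : 0 ≤ ε) (hM : 0 ≤ M)
    (hMb : ∀ x ∈ Set.Ioo a b, |w x - x| ≤ M)
    (Φ : Finset ι)
    (hP2 : ∀ x ∈ Set.Ioo a b, |za + (∑ i ∈ Φ.filter (fun i => emb i ≤ x), g i) - w x| ≤ ε) :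
    ∀ n : ℕ, ∀ y : ℝ, a < y → y ≤ b → (Φ.filter (fun i => emb i < y)).card = n →
    ENNReal.ofReal (Ft y (za + ∑ i ∈ Φ.filter (fun i => emb i < y), g i) - Ft a za)
      ≤ ENNReal.ofReal alp * (∑ i ∈ Φ.filter (fun i => emb i < y), ENNReal.ofReal (|g i| ^ θ))
        + (∫⁻ x in Set.Ioo a y, ENNReal.ofReal (3*(w x - x)^2))
        + ENNReal.ofReal (3*(2*M*ε + ε^2)) * volume (Set.Ioo a y) := by
  intro n
  induction n using Nat.strong_induction_on with
  | _ n IH =>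
    intro y hay hyb hcard
    by_cases hne : (Φ.filter (fun i => emb i < y)).Nonempty
    · -- peel the largest jump point below y
      set Fy := Φ.filter (fun i => emb i < y) with hFy
      have hFyim : (Fy.image emb).Nonempty := hne.image emb
      obtain ⟨m, hmFy, hm'⟩ := Finset.mem_image.mp ((Fy.image emb).max'_mem hFyim)
      have hmax : ∀ i ∈ Fy, emb i ≤ emb m := by
        intro i hi
        rw [hm']
        exact (Fy.image emb).le_max' _ (Finset.mem_image_of_mem emb hi)
      have hmy : emb m < y := (Finset.mem_filter.mp hmFy).2
      have ham : a < emb m := (hrange m).1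
      have herase : Φ.filter (fun i => emb i < emb m) = Fy.erase m := by
        ext i
        simp only [Finset.mem_filter, Finset.mem_erase, hFy]
        constructor
        · rintro ⟨hiΦ, hilt⟩
          exact ⟨fun h => absurd (h ▸ hilt) (lt_irrefl _), hiΦ, lt_trans hilt hmy⟩
        · rintro ⟨hne', hiΦ, hilt⟩
          refine ⟨hiΦ, ?_⟩
          rcases lt_or_eq_of_le (hmax i (Finset.mem_filter.mpr ⟨hiΦ, hilt⟩)) with h | h
          · exact h
          · exact absurd (hemb h) hne'
      have hcard' : (Fy.erase m).card < n := by
        rw [← hcard, hFy]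
        exact Finset.card_erase_lt_of_mem hmFy
      have hsum : (∑ i ∈ Fy.erase m, g i) + g m = ∑ i ∈ Fy, g i := Finset.sum_erase_add _ _ hmFy
      have hIH := IH _ hcard' (emb m) ham (le_of_lt (lt_of_lt_of_le hmy hyb)) (by rw [herase])
      rw [herase] at hIH
      -- cell estimate on (emb m, y)
      have hcell : ∀ x ∈ Set.Ioo (emb m) y, |(za + ∑ i ∈ Fy, g i) - w x| ≤ ε := by
        intro x hx
        have hxab : x ∈ Set.Ioo a b := ⟨lt_trans ham hx.1, lt_of_lt_of_le hx.2 hyb⟩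
        have hfilt : Φ.filter (fun i => emb i ≤ x) = Fy := by
          ext i
          simp only [Finset.mem_filter, hFy]
          constructor
          · rintro ⟨hiΦ, hile⟩
            exact ⟨hiΦ, lt_of_le_of_lt hile hx.2⟩
          · rintro ⟨hiΦ, hilt⟩
            exact ⟨hiΦ, le_of_lt (lt_of_le_of_lt (hmax i (Finset.mem_filter.mpr ⟨hiΦ, hilt⟩)) hx.1)⟩
        have := hP2 x hxab
        rwa [hfilt] at this
      have hA1 := cell_est h3 (le_of_lt ham) (le_of_lt hmy) hyb hε hM hMb hcell
      -- h4 estimate at emb m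
      have hA2 : ENNReal.ofReal (Ft (emb m) (za + ∑ i ∈ Fy, g i) - Ft (emb m) (za + ∑ i ∈ Fy.erase m, g i))
          ≤ ENNReal.ofReal alp * ENNReal.ofReal (|g m| ^ θ) := by
        rw [← ENNReal.ofReal_mul halp]
        apply ENNReal.ofReal_le_ofReal
        have := h4 (emb m) (za + ∑ i ∈ Fy.erase m, g i) (za + ∑ i ∈ Fy, g i)
        have heq : (za + ∑ i ∈ Fy, g i) - (za + ∑ i ∈ Fy.erase m, g i) = g m := by
          rw [← hsum]; ring
        rwa [heq] at this
      -- decompose and conclude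
      calc ENNReal.ofReal (Ft y (za + ∑ i ∈ Fy, g i) - Ft a za)
          = ENNReal.ofReal ((Ft y (za + ∑ i ∈ Fy, g i) - Ft (emb m) (za + ∑ i ∈ Fy, g i))
              + ((Ft (emb m) (za + ∑ i ∈ Fy, g i) - Ft (emb m) (za + ∑ i ∈ Fy.erase m, g i))
              + (Ft (emb m) (za + ∑ i ∈ Fy.erase m, g i) - Ft a za))) := by ring_nf
        _ ≤ ENNReal.ofReal (Ft y (za + ∑ i ∈ Fy, g i) - Ft (emb m) (za + ∑ i ∈ Fy, g i))
              + (ENNReal.ofReal ((Ft (emb m) (za + ∑ i ∈ Fy, g i) - Ft (emb m) (za + ∑ i ∈ Fy.erase m, g i))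
              + (Ft (emb m) (za + ∑ i ∈ Fy.erase m, g i) - Ft a za))) := ENNReal.ofReal_add_le
        _ ≤ ENNReal.ofReal (Ft y (za + ∑ i ∈ Fy, g i) - Ft (emb m) (za + ∑ i ∈ Fy, g i))
              + (ENNReal.ofReal (Ft (emb m) (za + ∑ i ∈ Fy, g i) - Ft (emb m) (za + ∑ i ∈ Fy.erase m, g i))
              + ENNReal.ofReal (Ft (emb m) (za + ∑ i ∈ Fy.erase m, g i) - Ft a za)) :=
            add_le_add_right ENNReal.ofReal_add_le _
        _ ≤ ((∫⁻ x in Set.Ioo (emb m) y, ENNReal.ofReal (3*(w x - x)^2))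
              + ENNReal.ofReal (3*(2*M*ε + ε^2)) * volume (Set.Ioo (emb m) y))
              + ((ENNReal.ofReal alp * ENNReal.ofReal (|g m| ^ θ))
              + (ENNReal.ofReal alp * (∑ i ∈ Fy.erase m, ENNReal.ofReal (|g i| ^ θ))
                + (∫⁻ x in Set.Ioo a (emb m), ENNReal.ofReal (3*(w x - x)^2))
                + ENNReal.ofReal (3*(2*M*ε + ε^2)) * volume (Set.Ioo a (emb m)))) :=
            add_le_add hA1 (add_le_add hA2 hIH)
        _ = ENNReal.ofReal alp * ((∑ i ∈ Fy.erase m, ENNReal.ofReal (|g i| ^ θ)) + ENNReal.ofReal (|g m| ^ θ))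
              + ((∫⁻ x in Set.Ioo a (emb m), ENNReal.ofReal (3*(w x - x)^2))
                 + (∫⁻ x in Set.Ioo (emb m) y, ENNReal.ofReal (3*(w x - x)^2)))
              + ENNReal.ofReal (3*(2*M*ε + ε^2))
                * (volume (Set.Ioo a (emb m)) + volume (Set.Ioo (emb m) y)) := by ring
        _ = ENNReal.ofReal alp * (∑ i ∈ Fy, ENNReal.ofReal (|g i| ^ θ))
              + (∫⁻ x in Set.Ioo a y, ENNReal.ofReal (3*(w x - x)^2))
              + ENNReal.ofReal (3*(2*M*ε + ε^2)) * volume (Set.Ioo a y) := by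
            rw [Finset.sum_erase_add _ _ hmFy, ← lintegral_Ioo_split _ _ _ _ (le_of_lt ham) (le_of_lt hmy),
              Real.volume_Ioo, Real.volume_Ioo, Real.volume_Ioo,
              ← ENNReal.ofReal_add (by linarith) (by linarith),
              show emb m - a + (y - emb m) = y - a by ring]
    · -- no jumps below y
      rw [Finset.not_nonempty_iff_eq_empty] at hne
      rw [hne]
      simp only [Finset.sum_empty, add_zero, Finset.card_empty]
      have hcell : ∀ x ∈ Set.Ioo a y, |za - w x| ≤ ε := by
        intro x hx
        have hxab : x ∈ Set.Ioo a b := ⟨hx.1, lt_of_lt_of_le hx.2 hyb⟩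
        have hsub : Φ.filter (fun i => emb i ≤ x) ⊆ Φ.filter (fun i => emb i < y) := by
          intro i hi
          rw [Finset.mem_filter] at *
          exact ⟨hi.1, lt_of_le_of_lt hi.2 hx.2⟩
        rw [hne] at hsub
        have hfilt := Finset.subset_empty.mp hsub
        have := hP2 x hxab
        rw [hfilt] at this
        simpa using this
      calc ENNReal.ofReal (Ft y za - Ft a za)
          ≤ (∫⁻ x in Set.Ioo a y, ENNReal.ofReal (3*(w x - x)^2))
            + ENNReal.ofReal (3*(2*M*ε + ε^2)) * volume (Set.Ioo a y) :=
            cell_est h3 (le_refl a) (le_of_lt hay) hyb hε hM hMb hcell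
        _ = ENNReal.ofReal alp * 0 + (∫⁻ x in Set.Ioo a y, ENNReal.ofReal (3*(w x - x)^2))
            + ENNReal.ofReal (3*(2*M*ε + ε^2)) * volume (Set.Ioo a y) := by
            rw [mul_zero, zero_add]
    


lemma tsum_compl_subtype_eq {κ : Type*} (f : κ → ℝ) (Φ : Finset κ) :
    ∑' (x : ↑((↑Φ : Set κ)ᶜ)), f x.1 = ∑' (i : {i // i ∉ Φ}), f i.1 := by
  rw [← Equiv.tsum_eq (⟨fun x => ⟨x.1, x.2⟩, fun x => ⟨x.1, x.2⟩, fun _ => rfl, fun _ => rfl⟩ :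
    ↑((↑Φ : Set κ)ᶜ) ≃ {i // i ∉ Φ}) (fun i => f i.1)]
  rfl

lemma pull3 (f : ℝ → ℝ) (A : Set ℝ) :
    ∫⁻ x in A, ENNReal.ofReal (3*(f x)) = ENNReal.ofReal 3 * ∫⁻ x in A, ENNReal.ofReal (f x) := by
  rw [← lintegral_const_mul' _ _ (by simp : (ENNReal.ofReal 3) ≠ ⊤)]
  apply lintegral_congr
  intro x
  rw [← ENNReal.ofReal_mul (by norm_num)]

lemma key {w : ℝ → ℝ} (P : PJloc w) {a b za zb a₁ b₁ : ℝ}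
    (hab : a < b) (ha₁ : a < a₁) (hb₁ : b₁ < b) (ha₁b : a₁ ≤ b) (hab₁ : a < b₁)
    (hwa : ∀ x ∈ Set.Ioo a a₁, w x = za)
    (hwb : ∀ x ∈ Set.Ioo b₁ b, w x = zb)
    (hSlow : ∀ y ∈ P.S ∩ Set.Ioo a b, a₁ ≤ y)
    (hShigh : ∀ y ∈ P.S ∩ Set.Ioo a b, y ≤ b₁)
    (hθ0 : 0 ≤ θ) (halp : 0 < alp)
    (h3 : ∀ x₁ x₂ z : ℝ, x₁ ≤ x₂ → Ft x₂ z - Ft x₁ z ≤ (x₂ - z)^3 - (x₁ - z)^3)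
    (h4 : ∀ x z₁ z₂ : ℝ, Ft x z₂ - Ft x z₁ ≤ alp * |z₂ - z₁| ^ θ) :
    ENNReal.ofReal (Ft b zb - Ft a za)
      ≤ ENNReal.ofReal alp * (∑' i : ↥(P.S ∩ Set.Ioo a b), ENNReal.ofReal (|P.J i.1| ^ θ))
        + ENNReal.ofReal 3 * ∫⁻ x in Set.Ioo a b, ENNReal.ofReal ((w x - x)^2) := by
  classical
  set ιι := ↥(P.S ∩ Set.Ioo a b) with hιι
  set g : ιι → ℝ := fun i => P.J i with hgdef
  have hrange : ∀ i : ιι, a < (i:ℝ) ∧ (i:ℝ) < b := fun i => ⟨i.2.2.1, i.2.2.2⟩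
  have hg : Summable fun i : ιι => |g i| := P.summable_loc a b hab
  obtain ⟨c, hw⟩ := repr_indicator P hab
  -- anchor : c = za
  have hx' : (a+a₁)/2 ∈ Set.Ioo a a₁ := ⟨by linarith, by linarith⟩
  have hx'b : (a+a₁)/2 ∈ Set.Ioo a b := ⟨hx'.1, lt_of_lt_of_le hx'.2 ha₁b⟩
  have hca : c = za := by
    have hTzero : {i : ιι | (i:ℝ) ≤ (a+a₁)/2} = ∅ := by
      ext i
      simp only [Set.mem_setOf_eq, Set.mem_empty_iff_false, iff_false, not_le]
      exact lt_of_lt_of_le hx'.2 (hSlow i i.2)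
    have h1 := hw _ hx'b
    rw [hTzero] at h1
    simp only [Set.indicator_empty, tsum_zero, add_zero] at h1
    rw [hwa _ hx'] at h1
    exact h1.symm
  -- full sum identification : zb = za + ∑' g
  have hx'' : (b₁+b)/2 ∈ Set.Ioo b₁ b := ⟨by linarith, by linarith⟩
  have hx''b : (b₁+b)/2 ∈ Set.Ioo a b := ⟨lt_trans hab₁ hx''.1, hx''.2⟩
  have hzb : zb = za + ∑' i : ιι, g i := by
    have hTfull : {i : ιι | (i:ℝ) ≤ (b₁+b)/2} = Set.univ := by
      ext i
      simp only [Set.mem_setOf_eq, Set.mem_univ, iff_true]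
      exact le_trans (hShigh i i.2) (by linarith)
    have h1 := hw _ hx''b
    rw [hTfull, Set.indicator_univ, hca, hwb _ hx''] at h1
    exact h1
  -- uniform bound M
  set Sa := ∑' i : ιι, |g i| with hSa
  have hSa0 : 0 ≤ Sa := tsum_nonneg (fun i => abs_nonneg _)
  have hTabs : ∀ x : ℝ, |∑' i, Set.indicator {i : ιι | (i:ℝ) ≤ x} g i| ≤ Sa := by
    intro x
    refine (abs_tsum_indicator_le hg _).trans ?_
    refine (tsum_indicator_mono hg (Set.subset_univ _)).trans ?_
    rw [Set.indicator_univ]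
  set M := |za| + Sa + |a| + |b| with hMdef
  have hM0 : 0 ≤ M := by positivity
  have hMb : ∀ x ∈ Set.Ioo a b, |w x - x| ≤ M := by
    intro x hx
    rw [hw x hx, hca]
    have h1 := hTabs x
    have h2 : |x| ≤ |a| + |b| := by
      rw [abs_le]
      constructor
      · have := neg_abs_le a
        have := abs_nonneg b
        linarith [hx.1]
      · have := le_abs_self b
        have := abs_nonneg a
        linarith [hx.2]
    set T := ∑' i, Set.indicator {i : ιι | (i:ℝ) ≤ x} g i
    calc |za + T - x| ≤ |za| + |T - x| := by
          have := abs_add_le za (T - x)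
          rw [add_sub_assoc]
          exact this
      _ ≤ |za| + (|T| + |x|) := by
          have := abs_sub T x
          linarith
      _ ≤ M := by rw [hMdef]; linarith
  set Jsum := ∑' i : ιι, ENNReal.ofReal (|g i| ^ θ) with hJsum
  by_cases htop : Jsum = ⊤
  · rw [htop, ENNReal.mul_top (by
      simp only [ne_eq, ENNReal.ofReal_eq_zero, not_le]
      exact halp)]
    exact le_top
  rcases finite_or_infinite ιι with hfin | hinf
  · -- finitely many jumps : exact argument with ε = 0
    haveI : Fintype ιι := @Fintype.ofFinite ιι hfin
    have hTfin : ∀ x : ℝ, (∑' i, Set.indicator {i : ιι | (i:ℝ) ≤ x} g i)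
        = ∑ i ∈ Finset.univ.filter (fun i : ιι => (i:ℝ) ≤ x), g i := by
      intro x
      rw [tsum_fintype, Finset.sum_filter]
      exact Finset.sum_congr rfl (fun i _ => by simp [Set.indicator_apply])
    have hP2 : ∀ x ∈ Set.Ioo a b,
        |za + (∑ i ∈ Finset.univ.filter (fun i : ιι => (i:ℝ) ≤ x), g i) - w x| ≤ 0 := by
      intro x hx
      rw [hw x hx, hca, ← hTfin x]
      simp [hgdef]
      exact sub_self _
    have hmain := main_aux h3 h4 halp.le Subtype.val_injective hrange le_rfl hM0 hMb
      Finset.univ hP2 (Finset.univ.filter (fun i : ιι => (i:ℝ) < b)).card b hab le_rfl rfl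
    have hfb : Finset.univ.filter (fun i : ιι => (i:ℝ) < b) = Finset.univ :=
      Finset.filter_true_of_mem (fun i _ => (hrange i).2)
    rw [hfb] at hmain
    have hzb' : za + ∑ i : ιι, g i = zb := by rw [hzb, tsum_fintype]
    rw [hzb'] at hmain
    calc ENNReal.ofReal (Ft b zb - Ft a za)
        ≤ ENNReal.ofReal alp * (∑ i : ιι, ENNReal.ofReal (|g i| ^ θ))
          + (∫⁻ x in Set.Ioo a b, ENNReal.ofReal (3*(w x - x)^2))
          + ENNReal.ofReal (3*(2*M*0 + 0^2)) * volume (Set.Ioo a b) := hmain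
      _ = ENNReal.ofReal alp * (∑ i : ιι, ENNReal.ofReal (|g i| ^ θ))
          + (∫⁻ x in Set.Ioo a b, ENNReal.ofReal (3*(w x - x)^2)) := by norm_num
      _ ≤ ENNReal.ofReal alp * Jsum
          + ENNReal.ofReal 3 * ∫⁻ x in Set.Ioo a b, ENNReal.ofReal ((w x - x)^2) := by
          rw [pull3 (fun x => (w x - x)^2)]
          exact add_le_add (mul_le_mul_right (ENNReal.sum_le_tsum Finset.univ) _) le_rfl
  · -- infinitely many jumps : θ > 0 and ε-approximation
    have hθpos : 0 < θ := by
      rcases lt_or_eq_of_le hθ0 with h | h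
      · exact h
      · exfalso
        apply htop
        rw [hJsum]
        have : ∀ i : ιι, ENNReal.ofReal (|g i| ^ θ) = 1 := by
          intro i
          rw [← h, Real.rpow_zero, ENNReal.ofReal_one]
        rw [tsum_congr this]
        exact ENNReal.tsum_const_eq_top_of_ne_zero one_ne_zero
    apply ENNReal.le_of_forall_pos_le_add
    intro δ hδ _
    have hδr : (0:ℝ) < δ := hδ
    set φ := fun e : ℝ => alp * e ^ θ + 3*(2*M*e + e^2) * (b - a) with hφ
    have hφ0 : φ 0 = 0 := by
      rw [hφ]
      simp [Real.zero_rpow hθpos.ne']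
    have hφcont : ContinuousAt φ 0 := by
      apply ContinuousAt.add
      · exact continuousAt_const.mul (Real.continuousAt_rpow_const 0 θ (Or.inr hθ0))
      · exact (((continuous_const.mul ((continuous_const.mul continuous_id).add
          (continuous_pow 2))).mul continuous_const)).continuousAt
    have hφt : Tendsto φ (𝓝[>] (0:ℝ)) (𝓝 0) := by
      have h := (hφcont.continuousWithinAt (s := Set.Ioi (0:ℝ))).tendsto
      rwa [hφ0] at h
    have hev := ((tendsto_order.1 hφt).2 δ hδr).and (eventually_mem_nhdsWithin (s := Set.Ioi (0:ℝ)))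
    obtain ⟨ε, hφε, hε0⟩ := hev.exists
    rw [Set.mem_Ioi] at hε0
    obtain ⟨Φ, hΦ⟩ := tail_small hg hε0
    -- pointwise closeness
    have hfe : ∀ x : ℝ, (∑ i ∈ Φ, Set.indicator {i : ιι | (i:ℝ) ≤ x} g i)
        = ∑ i ∈ Φ.filter (fun i : ιι => (i:ℝ) ≤ x), g i := by
      intro x
      rw [Finset.sum_filter]
      exact Finset.sum_congr rfl (fun i _ => by simp [Set.indicator_apply])
    have hΦ' : ∑' (i : ↑((↑Φ : Set ιι)ᶜ)), |g i.1| < ε := by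
      rw [tsum_compl_subtype_eq (fun i => |g i|) Φ]
      exact hΦ
    have htail' : ∀ x : ℝ, |∑' i : ↑((↑Φ : Set ιι)ᶜ), Set.indicator {i : ιι | (i:ℝ) ≤ x} g i.1| ≤ ε := by
      intro x
      have hs1 : Summable fun i : ↑((↑Φ : Set ιι)ᶜ) => |g i.1| := hg.subtype _
      have hs2 : Summable fun i : ↑((↑Φ : Set ιι)ᶜ) => ‖Set.indicator {i : ιι | (i:ℝ) ≤ x} g i.1‖ := by
        apply Summable.of_nonneg_of_le (fun i => norm_nonneg _) _ hs1
        intro i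
        rw [Real.norm_eq_abs]
        by_cases h : i.1 ∈ {i : ιι | (i:ℝ) ≤ x} <;> simp [Set.indicator_apply, h, abs_nonneg]
      refine le_trans (norm_tsum_le_tsum_norm hs2) (le_trans (Summable.tsum_le_tsum ?_ hs2 hs1) hΦ'.le)
      intro i
      rw [Real.norm_eq_abs]
      by_cases h : i.1 ∈ {i : ιι | (i:ℝ) ≤ x} <;> simp [Set.indicator_apply, h, abs_nonneg]
    have hP2 : ∀ x ∈ Set.Ioo a b,
        |za + (∑ i ∈ Φ.filter (fun i : ιι => (i:ℝ) ≤ x), g i) - w x| ≤ ε := by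
      intro x hx
      rw [hw x hx, hca, ← hfe x]
      have hsplit := Summable.sum_add_tsum_compl (s := Φ)
        ((hg.of_abs).indicator {i : ιι | (i:ℝ) ≤ x})
      have : za + (∑ i ∈ Φ, Set.indicator {i : ιι | (i:ℝ) ≤ x} g i)
          - (za + ∑' (i : ιι), Set.indicator {i : ιι | (i:ℝ) ≤ x} g i)
          = -(∑' i : ↑((↑Φ : Set ιι)ᶜ), Set.indicator {i : ιι | (i:ℝ) ≤ x} g i.1) := by
        rw [← hsplit]
        ring
      rw [this, abs_neg]
      exact htail' x
    have hmain := main_aux h3 h4 halp.le Subtype.val_injective hrange hε0.le hM0 hMb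
      Φ hP2 (Φ.filter (fun i : ιι => (i:ℝ) < b)).card b hab le_rfl rfl
    have hfb : Φ.filter (fun i : ιι => (i:ℝ) < b) = Φ :=
      Finset.filter_true_of_mem (fun i _ => (hrange i).2)
    rw [hfb] at hmain
    -- correction at the endpoint
    have hcorr : |zb - (za + ∑ i ∈ Φ, g i)| ≤ ε := by
      have hsplit := Summable.sum_add_tsum_compl (s := Φ) hg.of_abs
      have h1 : zb - (za + ∑ i ∈ Φ, g i) = ∑' i : ↑((↑Φ : Set ιι)ᶜ), g i.1 := by
        rw [hzb, ← hsplit]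
        ring
      rw [h1]
      have hs3 : Summable fun i : ↑((↑Φ : Set ιι)ᶜ) => ‖g i.1‖ := by
        have h := hg.subtype ((↑Φ : Set ιι)ᶜ)
        simp only [Real.norm_eq_abs]; exact h
      refine le_trans (norm_tsum_le_tsum_norm hs3) ?_
      calc ∑' (i : ↑((↑Φ : Set ιι)ᶜ)), ‖g i.1‖ = ∑' (i : ↑((↑Φ : Set ιι)ᶜ)), |g i.1| :=
            tsum_congr (fun i => Real.norm_eq_abs _)
        _ ≤ ε := hΦ'.le
    have hA0 : ENNReal.ofReal (Ft b zb - Ft b (za + ∑ i ∈ Φ, g i))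
        ≤ ENNReal.ofReal (alp * ε ^ θ) := by
      apply ENNReal.ofReal_le_ofReal
      refine le_trans (h4 b _ _) ?_
      apply mul_le_mul_of_nonneg_left _ halp.le
      exact Real.rpow_le_rpow (abs_nonneg _) hcorr hθ0
    calc ENNReal.ofReal (Ft b zb - Ft a za)
        = ENNReal.ofReal ((Ft b zb - Ft b (za + ∑ i ∈ Φ, g i))
            + (Ft b (za + ∑ i ∈ Φ, g i) - Ft a za)) := by ring_nf
      _ ≤ ENNReal.ofReal (Ft b zb - Ft b (za + ∑ i ∈ Φ, g i))
            + ENNReal.ofReal (Ft b (za + ∑ i ∈ Φ, g i) - Ft a za) := ENNReal.ofReal_add_le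
      _ ≤ ENNReal.ofReal (alp * ε ^ θ)
            + (ENNReal.ofReal alp * (∑ i ∈ Φ, ENNReal.ofReal (|g i| ^ θ))
              + (∫⁻ x in Set.Ioo a b, ENNReal.ofReal (3*(w x - x)^2))
              + ENNReal.ofReal (3*(2*M*ε + ε^2)) * volume (Set.Ioo a b)) :=
          add_le_add hA0 hmain
      _ ≤ ENNReal.ofReal (alp * ε ^ θ)
            + (ENNReal.ofReal alp * Jsum
              + ENNReal.ofReal 3 * (∫⁻ x in Set.Ioo a b, ENNReal.ofReal ((w x - x)^2))
              + ENNReal.ofReal (3*(2*M*ε + ε^2)) * volume (Set.Ioo a b)) := by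
          rw [pull3 (fun x => (w x - x)^2)]
          exact add_le_add le_rfl (add_le_add (add_le_add
            (mul_le_mul_right (ENNReal.sum_le_tsum Φ) _) le_rfl) le_rfl)
      _ ≤ (ENNReal.ofReal alp * Jsum
              + ENNReal.ofReal 3 * (∫⁻ x in Set.Ioo a b, ENNReal.ofReal ((w x - x)^2))) + ↑δ := by
          rw [Real.volume_Ioo]
          have hcomb : ENNReal.ofReal (alp * ε ^ θ)
              + ENNReal.ofReal (3*(2*M*ε + ε^2)) * ENNReal.ofReal (b - a)
              ≤ ↑δ := by
            have hq1 : (0:ℝ) ≤ 3*(2*M*ε + ε^2) := by nlinarith [mul_nonneg hM0 hε0.le, sq_nonneg ε]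
            rw [← ENNReal.ofReal_mul hq1, ← ENNReal.ofReal_add
              (mul_nonneg halp.le (Real.rpow_nonneg hε0.le θ)) (mul_nonneg hq1 (by linarith))]
            calc ENNReal.ofReal (alp * ε ^ θ + 3*(2*M*ε + ε^2) * (b - a))
                ≤ ENNReal.ofReal (φ ε) := by
                  apply ENNReal.ofReal_le_ofReal
                  rw [hφ]
              _ ≤ ↑δ := by
                  rw [← ENNReal.ofReal_coe_nnreal]
                  exact ENNReal.ofReal_le_ofReal hφε.le
          calc ENNReal.ofReal (alp * ε ^ θ)
              + (ENNReal.ofReal alp * Jsum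
                + ENNReal.ofReal 3 * (∫⁻ x in Set.Ioo a b, ENNReal.ofReal ((w x - x)^2))
                + ENNReal.ofReal (3*(2*M*ε + ε^2)) * ENNReal.ofReal (b - a))
              = (ENNReal.ofReal alp * Jsum
                + ENNReal.ofReal 3 * (∫⁻ x in Set.Ioo a b, ENNReal.ofReal ((w x - x)^2)))
                + (ENNReal.ofReal (alp * ε ^ θ)
                  + ENNReal.ofReal (3*(2*M*ε + ε^2)) * ENNReal.ofReal (b - a)) := by ring
            _ ≤ _ := add_le_add le_rfl hcomb




variable {τ₀ θ : ℝ} {v : ℝ → ℝ} {Ft : ℝ → ℝ → ℝ}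

lemma sq_lintegral' (a t z : ℝ) (h : a ≤ t) :
    ∫⁻ x in Set.Ioo a t, ENNReal.ofReal ((x-z)^2) = ENNReal.ofReal (((t-z)^3 - (a-z)^3)/3) := by
  rw [setLIntegral_congr (Ioo_ae_eq_Ioc (a := a) (b := t))]
  rw [← MeasureTheory.ofReal_integral_eq_lintegral_ofReal]
  · congr 1
    have h1 := integral_sq a t z
    have h2 : ∫ x in a..t, 3*(x-z)^2 = 3 * ∫ x in a..t, (x-z)^2 := by
      rw [← intervalIntegral.integral_const_mul]
    rw [← intervalIntegral.integral_of_le h]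
    rw [h2] at h1
    linarith
  · apply Continuous.integrableOn_Ioc; continuity
  · filter_upwards with x; positivity

/-- jump part of the staircase energy over one aligned interval. -/
lemma v_jsum (hv : ∀ x, v x = stairS (x - τ₀) + τ₀) (P : PJloc v) (p q : ℤ) :
    ∑' (i : ↥(P.S ∩ Set.Ioo (2*(p:ℝ)+1+τ₀) (2*(q:ℝ)+1+τ₀))), ENNReal.ofReal (|P.J i.1| ^ θ)
      = ((q - p - 1).toNat : ENNReal) * ENNReal.ofReal ((2:ℝ) ^ θ) := by
  classical
  have hinj : Function.Injective (fun k : ℤ => 2*(k:ℝ)+1+τ₀) := by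
    intro k₁ k₂ h
    simp only at h
    have : (k₁:ℝ) = (k₂:ℝ) := by linarith
    exact_mod_cast this
  have hset : P.S ∩ Set.Ioo (2*(p:ℝ)+1+τ₀) (2*(q:ℝ)+1+τ₀)
      = ↑((Finset.Ioo p q).image (fun k : ℤ => 2*(k:ℝ)+1+τ₀)) := by
    ext x
    simp only [Set.mem_inter_iff, v_S_iff hv P x, Set.mem_Ioo, Finset.coe_image,
      Set.mem_image, Finset.mem_coe, Finset.mem_Ioo]
    constructor
    · rintro ⟨⟨k, rfl⟩, hlt1, hlt2⟩
      refine ⟨k, ⟨?_, ?_⟩, rfl⟩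
      · have : (p:ℝ) < (k:ℝ) := by linarith
        exact_mod_cast this
      · have : (k:ℝ) < (q:ℝ) := by linarith
        exact_mod_cast this
    · rintro ⟨k, ⟨hk1, hk2⟩, rfl⟩
      have hk1' : (p:ℝ) < (k:ℝ) := by exact_mod_cast hk1
      have hk2' : (k:ℝ) < (q:ℝ) := by exact_mod_cast hk2
      exact ⟨⟨k, rfl⟩, by linarith, by linarith⟩
  rw [hset]
  rw [((Finset.Ioo p q).image (fun k : ℤ => 2*(k:ℝ)+1+τ₀)).tsum_subtype'
    (fun r => ENNReal.ofReal (|P.J r| ^ θ))]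
  have hJ : ∀ x ∈ (Finset.Ioo p q).image (fun k : ℤ => 2*(k:ℝ)+1+τ₀),
      ENNReal.ofReal (|P.J x| ^ θ) = ENNReal.ofReal ((2:ℝ) ^ θ) := by
    intro x hx
    obtain ⟨k, _, rfl⟩ := Finset.mem_image.mp hx
    rw [v_J_jump hv P k]
    norm_num
  rw [Finset.sum_congr rfl hJ, Finset.sum_const, Finset.card_image_of_injective _ hinj,
    Int.card_Ioo, nsmul_eq_mul]

/-- fidelity part of the staircase energy over one aligned interval. -/
lemma v_fid (hv : ∀ x, v x = stairS (x - τ₀) + τ₀) :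
    ∀ (n : ℕ) (p : ℤ),
    ∫⁻ x in Set.Ioo (2*(p:ℝ)+1+τ₀) (2*(p:ℝ)+1+τ₀+2*n), ENNReal.ofReal ((v x - x)^2)
      = (n : ENNReal) * ENNReal.ofReal (2/3) := by
  intro n
  induction n with
  | zero =>
    intro p
    norm_num
  | succ n IH =>
    intro p
    have hsplit := lintegral_Ioo_split (fun x => ENNReal.ofReal ((v x - x)^2))
      (2*(p:ℝ)+1+τ₀) (2*(p:ℝ)+3+τ₀) (2*(p:ℝ)+1+τ₀+2*(n+1:ℕ)) (by linarith)
      (by push_cast; linarith)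
    have hcell : ∫⁻ x in Set.Ioo (2*(p:ℝ)+1+τ₀) (2*(p:ℝ)+3+τ₀), ENNReal.ofReal ((v x - x)^2)
        = ENNReal.ofReal (2/3) := by
      have hcong : ∀ x ∈ Set.Ioo (2*(p:ℝ)+1+τ₀) (2*(p:ℝ)+3+τ₀),
          ENNReal.ofReal ((v x - x)^2) = ENNReal.ofReal ((x - (2*(p:ℝ)+2+τ₀))^2) := by
        intro x hx
        have hveq : v x = 2*((p+1:ℤ):ℝ)+τ₀ := v_eq hv (by push_cast; linarith [hx.1])
          (by push_cast; linarith [hx.2])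
        rw [hveq]
        push_cast
        rw [show 2*((p:ℝ)+1)+τ₀ - x = -(x - (2*(p:ℝ)+2+τ₀)) by ring, neg_sq]
      rw [setLIntegral_congr_fun measurableSet_Ioo hcong,
        sq_lintegral' _ _ _ (by linarith)]
      norm_num
    have hrest : ∫⁻ x in Set.Ioo (2*(p:ℝ)+3+τ₀) (2*(p:ℝ)+1+τ₀+2*(n+1:ℕ)),
        ENNReal.ofReal ((v x - x)^2) = (n : ENNReal) * ENNReal.ofReal (2/3) := by
      have h := IH (p+1)
      have e1 : 2*((p+1:ℤ):ℝ)+1+τ₀ = 2*(p:ℝ)+3+τ₀ := by push_cast; ring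
      have e2 : 2*((p+1:ℤ):ℝ)+1+τ₀+2*(n:ℕ) = 2*(p:ℝ)+1+τ₀+2*(n+1:ℕ) := by push_cast; ring
      rw [e2, e1] at h
      exact h
    rw [hsplit, hcell, hrest]
    push_cast
    ring

/-- telescoping the calibration along the staircase. -/
lemma tele
    (ht1 : ∀ j : ℤ, Ft (2*(j:ℝ)+1+τ₀) (2*(j:ℝ)+τ₀) - Ft (2*(j:ℝ)-1+τ₀) (2*(j:ℝ)+τ₀) = 2)
    (ht2 : ∀ j : ℤ, Ft (2*(j:ℝ)-1+τ₀) (2*(j:ℝ)+τ₀) - Ft (2*(j:ℝ)-1+τ₀) (2*(j:ℝ)-2+τ₀) = 4/(1-θ)) :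
    ∀ (n : ℕ) (p : ℤ),
    Ft (2*((p:ℝ)+(n:ℝ))+1+τ₀) (2*((p:ℝ)+(n:ℝ))+τ₀) - Ft (2*(p:ℝ)+1+τ₀) (2*(p:ℝ)+τ₀)
      = n*(2+4/(1-θ)) := by
  intro n
  induction n with
  | zero => intro p; norm_num
  | succ n IH =>
    intro p
    have h := IH p
    have t1 := ht1 (p + n + 1)
    have t2 := ht2 (p + n + 1)
    have e : ((p + (n:ℤ) + 1 : ℤ) : ℝ) = (p:ℝ) + (n:ℝ) + 1 := by push_cast; ring
    rw [e] at t1 t2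
    push_cast at t1 t2 h ⊢
    ring_nf at t1 t2 h ⊢
    linarith


lemma jsum_split (f : ℝ → ENNReal) (S A B : Set ℝ) (hd : Disjoint A B) :
    ∑' x : ↥(S ∩ (A ∪ B)), f x.1 = (∑' x : ↥(S ∩ A), f x.1) + ∑' x : ↥(S ∩ B), f x.1 := by
  rw [Set.inter_union_distrib_left]
  exact ENNReal.summable.tsum_union_disjoint (hd.mono Set.inter_subset_right Set.inter_subset_right)
    ENNReal.summable

lemma jsum_congr {S1 S2 : Set ℝ} (f g : ℝ → ENNReal) {A : Set ℝ} (hS : S1 ∩ A = S2 ∩ A)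
    (hfg : ∀ x ∈ S2 ∩ A, f x = g x) :
    ∑' x : ↥(S1 ∩ A), f x.1 = ∑' x : ↥(S2 ∩ A), g x.1 := by
  rw [hS]
  exact tsum_congr fun i => hfg i.1 i.2

lemma jsum_mono (f : ℝ → ENNReal) {A B : Set ℝ} (h : A ⊆ B) :
    ∑' x : ↥A, f x.1 ≤ ∑' x : ↥B, f x.1 :=
  ENNReal.summable.tsum_le_tsum_of_inj (Set.inclusion h) (Set.inclusion_injective h) (fun _ _ => zero_le)
    (fun _ => le_rfl) ENNReal.summable


end CalibAux

/-- **Calibration in one dimension.** If `F : ℝ² → ℝ` satisfies the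
two calibration equalities and the two calibration inequalities, then the canonical
staircase `S(x) = 2⌊(x+1)/2⌋` and all its oblique translations are entire local
minimizers of `JF_{θ, 2^{2-θ}/(1-θ), 3, 1}`. -/
theorem calibration_one_dimension
    (θ : ℝ) (hθ : θ ∈ Set.Ico (0:ℝ) 1)
    (F : ℝ → ℝ → ℝ)
    (h1 : ∀ j : ℤ, F (2 * (j:ℝ) + 1) (2 * (j:ℝ)) - F (2 * (j:ℝ) - 1) (2 * (j:ℝ)) = 2)
    (h2 : ∀ j : ℤ, F (2 * (j:ℝ) - 1) (2 * (j:ℝ)) - F (2 * (j:ℝ) - 1) (2 * (j:ℝ) - 2)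
            = 4 / (1 - θ))
    (h3 : ∀ x₁ x₂ z : ℝ, x₁ ≤ x₂ →
            F x₂ z - F x₁ z ≤ (x₂ - z) ^ 3 - (x₁ - z) ^ 3)
    (h4 : ∀ x z₁ z₂ : ℝ,
            F x z₂ - F x z₁ ≤ (2:ℝ) ^ (2 - θ) / (1 - θ) * |z₂ - z₁| ^ θ)
    (τ₀ : ℝ) (hτ : τ₀ ∈ Set.Icc (-1:ℝ) 1)
    (v : ℝ → ℝ) (hv : ∀ x, v x = stairS (x - τ₀) + τ₀)
    (Pv : PJloc v) :
    EntireLocalMin θ ((2:ℝ) ^ (2 - θ) / (1 - θ)) 3 1 v Pv := by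
  classical
  open CalibAux in
  intro Ω hΩ w Pw hex
  obtain ⟨K, hKc, hKΩ, hKw⟩ := hex
  have hθ0 : 0 ≤ θ := hθ.1
  have hθ1 : θ < 1 := hθ.2
  have h1θ : 0 < 1 - θ := by linarith
  set alp := (2:ℝ)^(2-θ)/(1-θ) with halpdef
  have halp : 0 < alp := div_pos (Real.rpow_pos_of_pos two_pos _) h1θ
  set Ft : ℝ → ℝ → ℝ := fun x z => F (x - τ₀) (z - τ₀) with hFt
  have ht3 : ∀ x₁ x₂ z : ℝ, x₁ ≤ x₂ → Ft x₂ z - Ft x₁ z ≤ (x₂ - z)^3 - (x₁ - z)^3 := by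
    intro x₁ x₂ z h
    have h' := h3 (x₁ - τ₀) (x₂ - τ₀) (z - τ₀) (by linarith)
    calc Ft x₂ z - Ft x₁ z ≤ (x₂-τ₀-(z-τ₀))^3 - (x₁-τ₀-(z-τ₀))^3 := h'
      _ = (x₂-z)^3 - (x₁-z)^3 := by ring
  have ht4 : ∀ x z₁ z₂ : ℝ, Ft x z₂ - Ft x z₁ ≤ alp * |z₂ - z₁|^θ := by
    intro x z₁ z₂
    have h' := h4 (x-τ₀) (z₁-τ₀) (z₂-τ₀)
    rw [show z₂-τ₀-(z₁-τ₀) = z₂-z₁ by ring] at h'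
    exact h'
  have ht1 : ∀ j : ℤ, Ft (2*(j:ℝ)+1+τ₀) (2*(j:ℝ)+τ₀) - Ft (2*(j:ℝ)-1+τ₀) (2*(j:ℝ)+τ₀) = 2 := by
    intro j
    have := h1 j
    simp only [hFt]
    rw [show 2*(j:ℝ)+1+τ₀-τ₀ = 2*(j:ℝ)+1 by ring, show 2*(j:ℝ)+τ₀-τ₀ = 2*(j:ℝ) by ring,
      show 2*(j:ℝ)-1+τ₀-τ₀ = 2*(j:ℝ)-1 by ring]
    exact this
  have ht2 : ∀ j : ℤ, Ft (2*(j:ℝ)-1+τ₀) (2*(j:ℝ)+τ₀) - Ft (2*(j:ℝ)-1+τ₀) (2*(j:ℝ)-2+τ₀)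
      = 4/(1-θ) := by
    intro j
    have := h2 j
    simp only [hFt]
    rw [show 2*(j:ℝ)-1+τ₀-τ₀ = 2*(j:ℝ)-1 by ring, show 2*(j:ℝ)+τ₀-τ₀ = 2*(j:ℝ) by ring,
      show 2*(j:ℝ)-2+τ₀-τ₀ = 2*(j:ℝ)-2 by ring]
    exact this
  -- choose an aligned interval (a,b) containing K
  obtain ⟨R, hR⟩ := hKc.isBounded.subset_closedBall 0
  have hRK : ∀ x ∈ K, -R ≤ x ∧ x ≤ R := by
    intro x hx
    have := hR hx
    rw [Metric.mem_closedBall, Real.dist_eq, sub_zero] at this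
    exact abs_le.mp this
  obtain ⟨p, hp⟩ := exists_int_lt ((-R - τ₀)/2 - 1)
  obtain ⟨q', hq'⟩ := exists_int_gt ((R - τ₀)/2 + 1)
  set q : ℤ := max q' (p+1) with hqdef
  have hq : ((R - τ₀)/2 + 1) < (q:ℝ) :=
    lt_of_lt_of_le hq' (by exact_mod_cast le_max_left q' (p+1))
  have hpq : p < q := lt_of_lt_of_le (lt_add_one p) (le_max_right q' (p+1))
  have hpqr : (p:ℝ) < (q:ℝ) := by exact_mod_cast hpq
  have hpqr' : (p:ℝ) + 1 ≤ (q:ℝ) := by exact_mod_cast hpq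
  set a : ℝ := 2*(p:ℝ)+1+τ₀ with hadef
  set b : ℝ := 2*(q:ℝ)+1+τ₀ with hbdef
  set za : ℝ := 2*(p:ℝ)+2+τ₀ with hzadef
  set zb : ℝ := 2*(q:ℝ)+τ₀ with hzbdef
  have hab : a < b := by rw [hadef, hbdef]; linarith
  have haR : a < -R := by rw [hadef]; linarith
  have hbR : R < b := by rw [hbdef]; linarith
  have hKab : K ⊆ Set.Ioo a b := fun x hx =>
    ⟨lt_of_lt_of_le haR (hRK x hx).1, lt_of_le_of_lt (hRK x hx).2 hbR⟩
  -- buffer points a₁ b₁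
  obtain ⟨a₁, ha₁a, ha₁K, ha₁le⟩ :
      ∃ a₁ : ℝ, a < a₁ ∧ (∀ x ∈ K, a₁ ≤ x) ∧ a₁ ≤ 2*(p:ℝ)+2+τ₀ := by
    rcases K.eq_empty_or_nonempty with hKe | hKne
    · exact ⟨2*(p:ℝ)+2+τ₀, by rw [hadef]; linarith, by simp [hKe], le_rfl⟩
    · refine ⟨min (2*(p:ℝ)+2+τ₀) (sInf K), ?_, ?_, min_le_left _ _⟩
      · have hmem := hKc.sInf_mem hKne
        have := (hKab hmem).1
        apply lt_min (by rw [hadef]; linarith) this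
      · intro x hx
        exact le_trans (min_le_right _ _) (csInf_le hKc.bddBelow hx)
  obtain ⟨b₁, hb₁b, hb₁K, hb₁ge⟩ :
      ∃ b₁ : ℝ, b₁ < b ∧ (∀ x ∈ K, x ≤ b₁) ∧ 2*(q:ℝ)+τ₀ ≤ b₁ := by
    rcases K.eq_empty_or_nonempty with hKe | hKne
    · exact ⟨2*(q:ℝ)+τ₀, by rw [hbdef]; linarith, by simp [hKe], le_rfl⟩
    · refine ⟨max (2*(q:ℝ)+τ₀) (sSup K), ?_, ?_, le_max_left _ _⟩
      · have hmem := hKc.sSup_mem hKne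
        have := (hKab hmem).2
        apply max_lt (by rw [hbdef]; linarith) this
      · intro x hx
        exact le_trans (le_csSup hKc.bddAbove hx) (le_max_right _ _)
  have ha₁b : a₁ ≤ b := le_trans ha₁le (by rw [hbdef]; linarith)
  have hab₁ : a < b₁ := lt_of_lt_of_le (by rw [hadef]; linarith) hb₁ge
  -- boundary values of the competitor
  have hwa : ∀ x ∈ Set.Ioo a a₁, w x = za := by
    intro x hx
    have hxK : x ∉ K := fun hxK => absurd (ha₁K x hxK) (not_le.mpr hx.2)
    rw [hKw x hxK]
    have hlo : 2*((p+1:ℤ):ℝ)-1+τ₀ ≤ x := by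
      push_cast
      rw [hadef] at hx
      linarith [hx.1]
    have hhi : x < 2*((p+1:ℤ):ℝ)+1+τ₀ := by
      push_cast
      have := lt_of_lt_of_le hx.2 ha₁le
      linarith
    rw [v_eq hv hlo hhi, hzadef]
    push_cast
    ring
  have hwb : ∀ x ∈ Set.Ioo b₁ b, w x = zb := by
    intro x hx
    have hxK : x ∉ K := fun hxK => absurd (hb₁K x hxK) (not_le.mpr hx.1)
    rw [hKw x hxK]
    have hlo : 2*(q:ℝ)-1+τ₀ ≤ x := by
      have := lt_of_le_of_lt hb₁ge hx.1
      linarith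
    have hhi : x < 2*(q:ℝ)+1+τ₀ := by rw [hbdef] at hx; exact hx.2
    rw [v_eq hv hlo hhi, hzbdef]
  -- jump rigidity away from K
  have hnotK : ∀ x : ℝ, x ∉ K → Pw.J x = Pv.J x := by
    intro x hx
    obtain ⟨δ, hδ0, hδ⟩ := Metric.isOpen_iff.mp hKc.isClosed.isOpen_compl x hx
    refine jump_congr Pw Pv hδ0 ?_
    intro y hy
    apply hKw
    have : y ∈ Metric.ball x δ := by rw [Real.ball_eq_Ioo]; exact hy
    exact hδ this
  have hmemK : ∀ x : ℝ, x ∉ K → (x ∈ Pw.S ↔ x ∈ Pv.S) := by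
    intro x hx
    rw [mem_S_iff Pw, mem_S_iff Pv, hnotK x hx]
  -- no jumps of w in the buffers
  have hSlow : ∀ y ∈ Pw.S ∩ Set.Ioo a b, a₁ ≤ y := by
    intro y hy
    by_contra hc
    push_neg at hc
    have hyK : y ∉ K := fun h => absurd (ha₁K y h) (not_le.mpr hc)
    have hnok : ¬∃ k : ℤ, y = 2*(k:ℝ)+1+τ₀ := by
      rintro ⟨k, rfl⟩
      have h1 : a < 2*(k:ℝ)+1+τ₀ := hy.2.1
      have h2 : 2*(k:ℝ)+1+τ₀ < 2*(p:ℝ)+2+τ₀ := lt_of_lt_of_le hc ha₁le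
      rw [hadef] at h1
      have hk1 : (p:ℝ) < (k:ℝ) := by linarith
      have hk2 : 2*(k:ℝ) < 2*(p:ℝ)+1 := by linarith
      have hk1' : p < k := by exact_mod_cast hk1
      have hk2' : 2*k < 2*p+1 := by exact_mod_cast hk2
      omega
    exact (Pw.J_ne y hy.1) ((hnotK y hyK).trans (v_J_zero hv Pv hnok))
  have hShigh : ∀ y ∈ Pw.S ∩ Set.Ioo a b, y ≤ b₁ := by
    intro y hy
    by_contra hc
    push_neg at hc
    have hyK : y ∉ K := fun h => absurd (hb₁K y h) (not_le.mpr hc)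
    have hnok : ¬∃ k : ℤ, y = 2*(k:ℝ)+1+τ₀ := by
      rintro ⟨k, rfl⟩
      have h1 : 2*(q:ℝ)+τ₀ < 2*(k:ℝ)+1+τ₀ := lt_of_le_of_lt hb₁ge hc
      have h2 : 2*(k:ℝ)+1+τ₀ < b := hy.2.2
      rw [hbdef] at h2
      have hk1 : 2*(q:ℝ) < 2*(k:ℝ)+1 := by linarith
      have hk2 : (k:ℝ) < (q:ℝ) := by linarith
      have hk1' : 2*q < 2*k+1 := by exact_mod_cast hk1
      have hk2' : k < q := by exact_mod_cast hk2
      omega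
    exact (Pw.J_ne y hy.1) ((hnotK y hyK).trans (v_J_zero hv Pv hnok))
  -- the calibration bound for the competitor on (a,b)
  have hkey := key Pw hab ha₁a hb₁b ha₁b hab₁ hwa hwb hSlow hShigh hθ0 halp ht3 ht4
  -- exact energy of the staircase on (a,b)
  set n : ℕ := (q-p).toNat with hndef
  set m : ℕ := (q-p-1).toNat with hmdef
  have hnr : (n:ℝ) = (q:ℝ)-(p:ℝ) := by
    have : ((q-p).toNat : ℤ) = q - p := Int.toNat_of_nonneg (by omega)
    rw [hndef]
    exact_mod_cast this
  have hmr : (m:ℝ) = (q:ℝ)-(p:ℝ)-1 := by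
    have : ((q-p-1).toNat : ℤ) = q - p - 1 := Int.toNat_of_nonneg (by omega)
    rw [hmdef]
    exact_mod_cast this
  have hC : Ft b zb - Ft a za = (n:ℝ)*(2+4/(1-θ)) - 4/(1-θ) := by
    have htele := tele ht1 ht2 n p
    have e1 : 2*((p:ℝ)+(n:ℝ))+1+τ₀ = b := by rw [hnr, hbdef]; ring
    have e2 : 2*((p:ℝ)+(n:ℝ))+τ₀ = zb := by rw [hnr, hzbdef]; ring
    rw [e1, e2] at htele
    have t2 := ht2 (p+1)
    have f1 : 2*((p+1:ℤ):ℝ)-1+τ₀ = a := by rw [hadef]; push_cast; ring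
    have f2 : 2*((p+1:ℤ):ℝ)+τ₀ = za := by rw [hzadef]; push_cast; ring
    have f3 : 2*((p+1:ℤ):ℝ)-2+τ₀ = 2*(p:ℝ)+τ₀ := by push_cast; ring
    rw [f1, f2, f3] at t2
    linarith
  have hJv := v_jsum (θ := θ) hv Pv p q
  have hIv : ∫⁻ x in Set.Ioo a b, ENNReal.ofReal ((v x - x)^2)
      = (n : ENNReal) * ENNReal.ofReal (2/3) := by
    have h := v_fid hv n p
    have e : 2*(p:ℝ)+1+τ₀+2*(n:ℝ) = b := by rw [hnr, hbdef]; ring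
    rw [e] at h
    rw [← hadef] at h
    exact h
  have halp2 : alp * (2:ℝ)^θ = 4/(1-θ) := by
    rw [halpdef, div_mul_eq_mul_div, ← Real.rpow_add two_pos,
      show (2:ℝ)-θ+θ = ((2:ℕ):ℝ) by push_cast; ring, Real.rpow_natCast]
    norm_num
  have hEv : ENNReal.ofReal alp
        * (∑' x : ↥(Pv.S ∩ Set.Ioo a b), ENNReal.ofReal (|Pv.J x.1| ^ θ))
        + ENNReal.ofReal 3 * ∫⁻ x in Set.Ioo a b, ENNReal.ofReal ((v x - x)^2)
      = ENNReal.ofReal (Ft b zb - Ft a za) := by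
    rw [hIv, hadef, hbdef, hJv, ← hmdef]
    rw [show ((m:ℕ) : ENNReal) = ENNReal.ofReal (m:ℝ) by rw [ENNReal.ofReal_natCast],
      show ((n:ℕ) : ENNReal) = ENNReal.ofReal (n:ℝ) by rw [ENNReal.ofReal_natCast]]
    rw [← ENNReal.ofReal_mul (by positivity : (0:ℝ) ≤ (m:ℝ)),
      ← ENNReal.ofReal_mul (by positivity : (0:ℝ) ≤ (n:ℝ)),
      ← ENNReal.ofReal_mul halp.le, ← ENNReal.ofReal_mul (by norm_num : (0:ℝ) ≤ 3),
      ← ENNReal.ofReal_add (by positivity) (by positivity), hC]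
    congr 1
    have hmn : (m:ℝ) = (n:ℝ) - 1 := by rw [hmr, hnr]
    have : alp * ((m:ℝ) * 2^θ) = (4/(1-θ)) * ((n:ℝ)-1) := by
      rw [hmn]
      calc alp * (((n:ℝ)-1) * 2^θ) = (alp * 2^θ) * ((n:ℝ)-1) := by ring
        _ = (4/(1-θ)) * ((n:ℝ)-1) := by rw [halp2]
    rw [this]
    ring
  -- splitting of the functional
  simp only [JF, one_mul]
  set I := Set.Ioo a b with hI
  have hdis1 : Disjoint (Ω ∩ I) (Ω \ I) :=
    Set.disjoint_left.mpr fun x hx hx' => hx'.2 hx.2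
  have hdis2 : Disjoint (Ω ∩ I) (I \ Ω) :=
    Set.disjoint_left.mpr fun x hx hx' => hx'.2 hx.1
  have huΩ : (Ω ∩ I) ∪ (Ω \ I) = Ω := Set.inter_union_diff Ω I
  have huI : (Ω ∩ I) ∪ (I \ Ω) = I := by
    rw [Set.inter_comm]
    exact Set.inter_union_diff I Ω
  have hmeas1 : MeasurableSet (Ω \ I) := hΩ.measurableSet.diff measurableSet_Ioo
  have hmeas2 : MeasurableSet (I \ Ω) := measurableSet_Ioo.diff hΩ.measurableSet
  -- congruence off K
  have hout1 : ∀ x ∈ Ω \ I, x ∉ K := fun x hx hk => hx.2 (hKab hk)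
  have hout2 : ∀ x ∈ I \ Ω, x ∉ K := fun x hx hk => hx.2 (hKΩ hk)
  have hScong : ∀ (A : Set ℝ), (∀ x ∈ A, x ∉ K) → Pw.S ∩ A = Pv.S ∩ A := by
    intro A hA
    ext x
    constructor
    · rintro ⟨h1, h2⟩
      exact ⟨(hmemK x (hA x h2)).mp h1, h2⟩
    · rintro ⟨h1, h2⟩
      exact ⟨(hmemK x (hA x h2)).mpr h1, h2⟩
  have hJcong : ∀ (A : Set ℝ), (∀ x ∈ A, x ∉ K) →
      (∑' x : ↥(Pw.S ∩ A), ENNReal.ofReal (|Pw.J x.1| ^ θ))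
        = ∑' x : ↥(Pv.S ∩ A), ENNReal.ofReal (|Pv.J x.1| ^ θ) := by
    intro A hA
    exact jsum_congr (fun r => ENNReal.ofReal (|Pw.J r| ^ θ))
      (fun r => ENNReal.ofReal (|Pv.J r| ^ θ)) (hScong A hA)
      (fun x hx => by
        show ENNReal.ofReal (|Pw.J x| ^ θ) = ENNReal.ofReal (|Pv.J x| ^ θ)
        rw [hnotK x (hA x hx.2)])
  have hIcong : ∀ (A : Set ℝ), MeasurableSet A → (∀ x ∈ A, x ∉ K) →
      (∫⁻ x in A, ENNReal.ofReal ((w x - x)^2)) = ∫⁻ x in A, ENNReal.ofReal ((v x - x)^2) := by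
    intro A hA hAK
    apply setLIntegral_congr_fun hA
    intro x hx
    simp only [hKw x (hAK x hx)]
  -- split all sums/integrals
  have hsv : (∑' x : ↥(Pv.S ∩ Ω), ENNReal.ofReal (|Pv.J x.1| ^ θ))
      = (∑' x : ↥(Pv.S ∩ (Ω ∩ I)), ENNReal.ofReal (|Pv.J x.1| ^ θ))
        + ∑' x : ↥(Pv.S ∩ (Ω \ I)), ENNReal.ofReal (|Pv.J x.1| ^ θ) := by
    conv_lhs => rw [← huΩ]
    exact jsum_split (fun r => ENNReal.ofReal (|Pv.J r| ^ θ)) Pv.S _ _ hdis1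
  have hsw : (∑' x : ↥(Pw.S ∩ Ω), ENNReal.ofReal (|Pw.J x.1| ^ θ))
      = (∑' x : ↥(Pw.S ∩ (Ω ∩ I)), ENNReal.ofReal (|Pw.J x.1| ^ θ))
        + ∑' x : ↥(Pw.S ∩ (Ω \ I)), ENNReal.ofReal (|Pw.J x.1| ^ θ) := by
    conv_lhs => rw [← huΩ]
    exact jsum_split (fun r => ENNReal.ofReal (|Pw.J r| ^ θ)) Pw.S _ _ hdis1
  have hsvI : (∑' x : ↥(Pv.S ∩ I), ENNReal.ofReal (|Pv.J x.1| ^ θ))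
      = (∑' x : ↥(Pv.S ∩ (Ω ∩ I)), ENNReal.ofReal (|Pv.J x.1| ^ θ))
        + ∑' x : ↥(Pv.S ∩ (I \ Ω)), ENNReal.ofReal (|Pv.J x.1| ^ θ) := by
    conv_lhs => rw [← huI]
    exact jsum_split (fun r => ENNReal.ofReal (|Pv.J r| ^ θ)) Pv.S _ _ hdis2
  have hswI : (∑' x : ↥(Pw.S ∩ I), ENNReal.ofReal (|Pw.J x.1| ^ θ))
      = (∑' x : ↥(Pw.S ∩ (Ω ∩ I)), ENNReal.ofReal (|Pw.J x.1| ^ θ))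
        + ∑' x : ↥(Pw.S ∩ (I \ Ω)), ENNReal.ofReal (|Pw.J x.1| ^ θ) := by
    conv_lhs => rw [← huI]
    exact jsum_split (fun r => ENNReal.ofReal (|Pw.J r| ^ θ)) Pw.S _ _ hdis2
  have hivΩ : (∫⁻ x in Ω, ENNReal.ofReal ((v x - x)^2))
      = (∫⁻ x in Ω ∩ I, ENNReal.ofReal ((v x - x)^2))
        + ∫⁻ x in Ω \ I, ENNReal.ofReal ((v x - x)^2) := by
    conv_lhs => rw [← huΩ]
    exact lintegral_union hmeas1 hdis1
  have hiwΩ : (∫⁻ x in Ω, ENNReal.ofReal ((w x - x)^2))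
      = (∫⁻ x in Ω ∩ I, ENNReal.ofReal ((w x - x)^2))
        + ∫⁻ x in Ω \ I, ENNReal.ofReal ((w x - x)^2) := by
    conv_lhs => rw [← huΩ]
    exact lintegral_union hmeas1 hdis1
  have hivI : (∫⁻ x in I, ENNReal.ofReal ((v x - x)^2))
      = (∫⁻ x in Ω ∩ I, ENNReal.ofReal ((v x - x)^2))
        + ∫⁻ x in I \ Ω, ENNReal.ofReal ((v x - x)^2) := by
    conv_lhs => rw [← huI]
    exact lintegral_union hmeas2 hdis2
  have hiwI : (∫⁻ x in I, ENNReal.ofReal ((w x - x)^2))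
      = (∫⁻ x in Ω ∩ I, ENNReal.ofReal ((w x - x)^2))
        + ∫⁻ x in I \ Ω, ENNReal.ofReal ((w x - x)^2) := by
    conv_lhs => rw [← huI]
    exact lintegral_union hmeas2 hdis2
  -- the common finite correction term
  set X := ENNReal.ofReal alp * (∑' x : ↥(Pv.S ∩ (I \ Ω)), ENNReal.ofReal (|Pv.J x.1| ^ θ))
    + ENNReal.ofReal 3 * ∫⁻ x in I \ Ω, ENNReal.ofReal ((v x - x)^2) with hX
  have hXfin : X ≠ ⊤ := by
    have hle : X ≤ ENNReal.ofReal alp * (∑' x : ↥(Pv.S ∩ I), ENNReal.ofReal (|Pv.J x.1| ^ θ))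
        + ENNReal.ofReal 3 * ∫⁻ x in I, ENNReal.ofReal ((v x - x)^2) := by
      rw [hX]
      apply add_le_add
      · exact mul_le_mul_right (jsum_mono (fun r => ENNReal.ofReal (|Pv.J r| ^ θ))
          (Set.inter_subset_inter_right _ Set.diff_subset)) _
      · exact mul_le_mul_right (lintegral_mono_set Set.diff_subset) _
    rw [hI] at hle
    rw [hEv] at hle
    exact ne_top_of_le_ne_top ENNReal.ofReal_ne_top hle
  -- final comparison with cancellation
  rw [← ENNReal.add_le_add_iff_right hXfin]
  calc ENNReal.ofReal alp * (∑' x : ↥(Pv.S ∩ Ω), ENNReal.ofReal (|Pv.J x.1| ^ θ))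
        + ENNReal.ofReal 3 * (∫⁻ x in Ω, ENNReal.ofReal ((v x - x)^2)) + X
      = (ENNReal.ofReal alp * (∑' x : ↥(Pv.S ∩ I), ENNReal.ofReal (|Pv.J x.1| ^ θ))
          + ENNReal.ofReal 3 * ∫⁻ x in I, ENNReal.ofReal ((v x - x)^2))
        + (ENNReal.ofReal alp * (∑' x : ↥(Pv.S ∩ (Ω \ I)), ENNReal.ofReal (|Pv.J x.1| ^ θ))
          + ENNReal.ofReal 3 * ∫⁻ x in Ω \ I, ENNReal.ofReal ((v x - x)^2)) := by
        rw [hX, hsv, hsvI, hivΩ, hivI]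
        ring
    _ ≤ (ENNReal.ofReal alp * (∑' x : ↥(Pw.S ∩ I), ENNReal.ofReal (|Pw.J x.1| ^ θ))
          + ENNReal.ofReal 3 * ∫⁻ x in I, ENNReal.ofReal ((w x - x)^2))
        + (ENNReal.ofReal alp * (∑' x : ↥(Pv.S ∩ (Ω \ I)), ENNReal.ofReal (|Pv.J x.1| ^ θ))
          + ENNReal.ofReal 3 * ∫⁻ x in Ω \ I, ENNReal.ofReal ((v x - x)^2)) := by
        apply add_le_add_left
        rw [hI, hEv]
        exact hkey
    _ = ENNReal.ofReal alp * (∑' x : ↥(Pw.S ∩ Ω), ENNReal.ofReal (|Pw.J x.1| ^ θ))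
        + ENNReal.ofReal 3 * (∫⁻ x in Ω, ENNReal.ofReal ((w x - x)^2)) + X := by
        rw [hX, hsw, hswI, hiwΩ, hiwI,
          hJcong (Ω \ I) hout1, hIcong (Ω \ I) hmeas1 hout1,
          hJcong (I \ Ω) hout2, hIcong (I \ Ω) hmeas2 hout2]
        ring
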